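/- Let Z = ℤ/(mℤ) be a cyclic group viewed as a commutative ring. Under the action of GL_n(Z) × GL_n(Z) on M_n(Z) given by (g,h).A = gAh⁻¹, each orbit contains a unique diagonal matrix diag(h_1,…,h_n) with h_i ∈ P and h_1 | h_2 | … | h_n, where P is the fixed multiplicatively closed set of representatives of the Z^×-cosets (for m = p_1^{ℓ_1}⋯p_k^{ℓ_k}, P = { p̄_1^{j_1}⋯p̄_k^{j_k} : 0 ≤ j_i ≤ ℓ_i }). -/

import Mathlib

open Matrix

namespace SNFAux

variable {R : Type*} [CommRing R] {ι : Type*} [Fintype ι] [DecidableEq ι]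

/-- Two square matrices are equivalent if one is obtained from the other by
multiplying by units on both sides. -/
def MEquiv (A B : Matrix ι ι R) : Prop :=
  ∃ g h : (Matrix ι ι R)ˣ, (↑g : Matrix ι ι R) * A * (↑h : Matrix ι ι R) = B

theorem MEquiv.refl (A : Matrix ι ι R) : MEquiv A A := ⟨1, 1, by simp⟩

theorem MEquiv.symm {A B : Matrix ι ι R} (h : MEquiv A B) : MEquiv B A := by
  obtain ⟨g, u, rfl⟩ := h
  refine ⟨g⁻¹, u⁻¹, ?_⟩
  calc (↑g⁻¹ : Matrix ι ι R) * ((↑g : Matrix ι ι R) * A * ↑u) * (↑u⁻¹ : Matrix ι ι R)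
      = (↑g⁻¹ * ↑g : Matrix ι ι R) * A * (↑u * ↑u⁻¹ : Matrix ι ι R) := by
        simp only [Matrix.mul_assoc]
    _ = A := by rw [← Units.val_mul, ← Units.val_mul]; simp

theorem MEquiv.trans {A B C : Matrix ι ι R} (h₁ : MEquiv A B) (h₂ : MEquiv B C) :
    MEquiv A C := by
  obtain ⟨g₁, u₁, rfl⟩ := h₁
  obtain ⟨g₂, u₂, rfl⟩ := h₂
  exact ⟨g₂ * g₁, u₁ * u₂, by simp only [Units.val_mul, Matrix.mul_assoc]⟩

theorem MEquiv.of_isUnit {U V : Matrix ι ι R} (hU : IsUnit U) (hV : IsUnit V)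
    (A : Matrix ι ι R) : MEquiv A (U * A * V) := by
  obtain ⟨g, rfl⟩ := hU
  obtain ⟨u, rfl⟩ := hV
  exact ⟨g, u, rfl⟩

theorem MEquiv.transpose {A B : Matrix ι ι R} (h : MEquiv A B) : MEquiv Aᵀ Bᵀ := by
  obtain ⟨g, u, rfl⟩ := h
  refine ⟨⟨(↑u)ᵀ, (↑u⁻¹)ᵀ, ?_, ?_⟩, ⟨(↑g)ᵀ, (↑g⁻¹)ᵀ, ?_, ?_⟩,
    by simp [Matrix.transpose_mul, Matrix.mul_assoc]⟩ <;>
    · rw [← Matrix.transpose_mul, ← Units.val_mul]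
      simp

theorem MEquiv.dvd_all {A B : Matrix ι ι R} (h : MEquiv A B) {a : R}
    (hA : ∀ i j, a ∣ A i j) : ∀ i j, a ∣ B i j := by
  obtain ⟨g, u, rfl⟩ := h
  intro i j
  rw [Matrix.mul_apply]
  refine Finset.dvd_sum fun k _ => ?_
  rw [Matrix.mul_apply, Finset.sum_mul]
  exact Finset.dvd_sum fun l _ => ((hA l k).mul_left _).mul_right _

theorem unit_mul_mulVec_eq_zero (g : (Matrix ι ι R)ˣ) (M : Matrix ι ι R) (x : ι → R) :
    ((↑g : Matrix ι ι R) * M).mulVec x = 0 ↔ M.mulVec x = 0 := by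
  constructor
  · intro h
    have := congrArg (fun z => (↑g⁻¹ : Matrix ι ι R).mulVec z) h
    simpa [Matrix.mulVec_mulVec, ← Matrix.mul_assoc, ← Units.val_mul] using this
  · intro h; rw [← Matrix.mulVec_mulVec, h, Matrix.mulVec_zero]

/-- mulVec by a unit, as an equiv. -/
def mulVecEquiv (u : (Matrix ι ι R)ˣ) : (ι → R) ≃ (ι → R) where
  toFun := (↑u : Matrix ι ι R).mulVec
  invFun := (↑u⁻¹ : Matrix ι ι R).mulVec
  left_inv := fun x => by simp [Matrix.mulVec_mulVec, ← Units.val_mul]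
  right_inv := fun x => by simp [Matrix.mulVec_mulVec, ← Units.val_mul]

/-- The number of solutions of `A x = 0` is an invariant of equivalence. -/
theorem MEquiv.kerCard_eq {A B : Matrix ι ι R} (h : MEquiv A B) :
    Nat.card {x : ι → R // A.mulVec x = 0} = Nat.card {x : ι → R // B.mulVec x = 0} := by
  obtain ⟨g, u, rfl⟩ := h
  refine (Nat.card_congr (Equiv.subtypeEquiv (mulVecEquiv u) fun x => ?_)).symm
  have : ((↑g : Matrix ι ι R) * A * (↑u : Matrix ι ι R)).mulVec x = 0 ↔
      A.mulVec ((↑u : Matrix ι ι R).mulVec x) = 0 := by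
    rw [Matrix.mul_assoc, unit_mul_mulVec_eq_zero, Matrix.mulVec_mulVec]
  exact this

section Ops

variable (p : ι)

/-- matrix supported on column `p`. -/
def cvec (u : ι → R) : Matrix ι ι R := Matrix.of fun i j => if j = p then u i else 0

/-- matrix supported on row `p`. -/
def rvec (v : ι → R) : Matrix ι ι R := Matrix.of fun i j => if i = p then v j else 0

theorem cvec_mul (u : ι → R) (A : Matrix ι ι R) (i j : ι) :
    (cvec p u * A) i j = u i * A p j := by
  simp [cvec, Matrix.mul_apply, ite_mul]

theorem mul_rvec (v : ι → R) (A : Matrix ι ι R) (i j : ι) :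
    (A * rvec p v) i j = A i p * v j := by
  simp [rvec, Matrix.mul_apply, mul_ite]

theorem rvec_mul (v : ι → R) (A : Matrix ι ι R) (i j : ι) :
    (rvec p v * A) i j = if i = p then ∑ k, v k * A k j else 0 := by
  simp only [rvec, Matrix.mul_apply, Matrix.of_apply, ite_mul, zero_mul]
  split <;> simp

theorem isUnit_one_add {N : Matrix ι ι R} (h : N * N = 0) : IsUnit (1 + N) := by
  have h1 : (1 + N) * (1 - N) = 1 - N * N + (N - N) := by noncomm_ring
  have h2 : (1 - N) * (1 + N) = 1 - N * N + (N - N) := by noncomm_ring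
  exact ⟨⟨1 + N, 1 - N, by rw [h1, h]; simp, by rw [h2, h]; simp⟩, rfl⟩

theorem cvec_sq (u : ι → R) (h : u p = 0) : cvec p u * cvec p u = 0 := by
  ext i j
  rw [cvec_mul]
  simp [cvec, h]

theorem rvec_sq (v : ι → R) (h : v p = 0) : rvec p v * rvec p v = 0 := by
  ext i j
  rw [rvec_mul]
  simp [rvec, mul_ite, h]

theorem isUnit_one_add_cvec (u : ι → R) (h : u p = 0) : IsUnit (1 + cvec p u) :=
  isUnit_one_add (cvec_sq p u h)

theorem isUnit_one_add_rvec (v : ι → R) (h : v p = 0) : IsUnit (1 + rvec p v) :=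
  isUnit_one_add (rvec_sq p v h)

/-- add `u i` times row `p` to each row `i` (requires `u p = 0`). -/
theorem mequiv_add_rows (u : ι → R) (h : u p = 0) (A : Matrix ι ι R) :
    MEquiv A (Matrix.of fun i j => A i j + u i * A p j) := by
  have h0 := MEquiv.of_isUnit (isUnit_one_add_cvec p u h) isUnit_one A
  rw [mul_one] at h0
  have hE : (1 + cvec p u) * A = Matrix.of fun i j => A i j + u i * A p j := by
    ext i j
    rw [Matrix.add_mul, Matrix.one_mul]
    simp [cvec_mul]
  rwa [hE] at h0

/-- add `v j` times column `p` to each column `j` (requires `v p = 0`). -/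
theorem mequiv_add_cols (v : ι → R) (h : v p = 0) (A : Matrix ι ι R) :
    MEquiv A (Matrix.of fun i j => A i j + A i p * v j) := by
  have h0 := MEquiv.of_isUnit isUnit_one (isUnit_one_add_rvec p v h) A
  rw [Matrix.one_mul] at h0
  have hE : A * (1 + rvec p v) = Matrix.of fun i j => A i j + A i p * v j := by
    ext i j
    rw [Matrix.mul_add, Matrix.mul_one]
    simp [mul_rvec]
  rwa [hE] at h0

/-- add row `i₀` to row `p` (requires `i₀ ≠ p`). -/
theorem mequiv_pivot_row_add (i₀ : ι) (h : i₀ ≠ p) (A : Matrix ι ι R) :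
    MEquiv A (Matrix.of fun i j => if i = p then A p j + A i₀ j else A i j) := by
  set w : ι → R := fun k => if k = i₀ then (1:R) else 0 with hw
  have hu : w p = 0 := by simp [hw, h.symm]
  have h0 := MEquiv.of_isUnit (isUnit_one_add_rvec p w hu) isUnit_one A
  rw [mul_one] at h0
  have hE : (1 + rvec p w) * A = Matrix.of fun i j => if i = p then A p j + A i₀ j else A i j := by
    ext i j
    rw [Matrix.add_mul, Matrix.one_mul]
    simp only [Matrix.of_apply, Matrix.add_apply, rvec_mul, hw, ite_mul, one_mul, zero_mul]
    by_cases hi : i = p <;> simp [hi]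
  rwa [hE] at h0

theorem isUnit_perm (sigma : Equiv.Perm ι) :
    IsUnit ((Equiv.toPEquiv sigma).toMatrix : Matrix ι ι R) := by
  rw [Matrix.isUnit_iff_isUnit_det, Matrix.det_permutation]
  rcases Int.units_eq_one_or sigma.sign with h | h <;> simp [h]

theorem mequiv_submatrix (sigma tau : Equiv.Perm ι) (A : Matrix ι ι R) :
    MEquiv A (A.submatrix sigma tau) := by
  have h0 := MEquiv.of_isUnit (isUnit_perm (R := R) sigma) (isUnit_perm (R := R) tau⁻¹) A
  rwa [PEquiv.mul_toMatrix_toPEquiv, PEquiv.toMatrix_toPEquiv_mul,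
    Matrix.submatrix_submatrix, Function.comp_id, Function.id_comp,
    show ((tau⁻¹ : Equiv.Perm ι).symm : ι → ι) = (tau : ι → ι) by
      simp [Equiv.Perm.inv_def]] at h0

end Ops

section Pivot

variable {m : ℕ} [NeZero m] {ι : Type*} [Fintype ι] [DecidableEq ι]

theorem zmod_cast_val (a : ZMod m) : ((a.val : ℕ) : ZMod m) = a := by
  rw [ZMod.natCast_val, ZMod.cast_id]

theorem euclid_sub (a b : ZMod m) :
    b - ((b.val / a.val : ℕ) : ZMod m) * a = ((b.val % a.val : ℕ) : ZMod m) := by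
  have h2 : ((a.val * (b.val / a.val) + b.val % a.val : ℕ) : ZMod m) = b := by
    rw [Nat.div_add_mod b.val a.val, zmod_cast_val]
  push_cast at h2
  rw [zmod_cast_val] at h2
  linear_combination -h2

theorem dvd_of_mod_val_eq_zero {a b : ZMod m} (h : b.val % a.val = 0) : a ∣ b := by
  have h1 := euclid_sub a b
  rw [h] at h1
  have hb : b = ((b.val / a.val : ℕ) : ZMod m) * a := by
    rw [← sub_eq_zero]
    simpa using h1
  exact ⟨((b.val / a.val : ℕ) : ZMod m), hb.trans (mul_comm _ _)⟩

/-- the measure used in the reduction -/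
def mu (p : ι) (A : Matrix ι ι (ZMod m)) : ℕ := if A p p = 0 then m else (A p p).val

theorem mu_pos (p : ι) (A : Matrix ι ι (ZMod m)) : 0 < mu p A := by
  unfold mu
  split
  · exact Nat.pos_of_ne_zero (NeZero.ne m)
  · rename_i h
    exact Nat.pos_of_ne_zero fun h0 => h ((ZMod.val_eq_zero _).mp h0)

/-- Euclidean step: if the pivot does not divide an entry in the pivot row,
we can strictly decrease the pivot value. -/
theorem row_step (p : ι) (A : Matrix ι ι (ZMod m)) (ha : A p p ≠ 0) (j : ι) (hj : j ≠ p)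
    (hdvd : ¬ A p p ∣ A p j) :
    ∃ A', MEquiv A A' ∧ A' p p ≠ 0 ∧ (A' p p).val < (A p p).val := by
  have hrlt : (A p j).val % (A p p).val < (A p p).val :=
    Nat.mod_lt _ (Nat.pos_of_ne_zero fun h0 => ha ((ZMod.val_eq_zero _).mp h0))
  have hrne : (A p j).val % (A p p).val ≠ 0 := fun h0 => hdvd (dvd_of_mod_val_eq_zero h0)
  set v : ι → ZMod m :=
    fun k => if k = j then -(((A p j).val / (A p p).val : ℕ) : ZMod m) else 0 with hv
  have hvp : v p = 0 := by
    simp only [hv]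
    exact if_neg fun h => hj h.symm
  have h1 := mequiv_add_cols p v hvp A
  have hA1pj : (Matrix.of fun i j' => A i j' + A i p * v j') p j
      = (((A p j).val % (A p p).val : ℕ) : ZMod m) := by
    show A p j + A p p * v j = _
    have hvj : v j = -(((A p j).val / (A p p).val : ℕ) : ZMod m) := by
      simp [hv]
    rw [hvj, ← euclid_sub (A p p) (A p j)]
    ring
  set A' := (Matrix.of fun i j' => A i j' + A i p * v j').submatrix
    (Equiv.refl ι) (Equiv.swap p j) with hA'
  have hA'pp : A' p p = (((A p j).val % (A p p).val : ℕ) : ZMod m) := by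
    rw [hA', Matrix.submatrix_apply, Equiv.refl_apply, Equiv.swap_apply_left]
    exact hA1pj
  have hrv : ((((A p j).val % (A p p).val : ℕ)) : ZMod m).val = (A p j).val % (A p p).val :=
    ZMod.val_cast_of_lt (lt_trans hrlt (ZMod.val_lt _))
  refine ⟨A', h1.trans (mequiv_submatrix _ _ _), ?_, ?_⟩
  · rw [hA'pp]
    intro h0
    rw [h0] at hrv
    exact hrne (by simpa using hrv.symm)
  · rw [hA'pp, hrv]
    exact hrlt

theorem pivot_reduce (p : ι) (A : Matrix ι ι (ZMod m)) :
    ∃ B, MEquiv A B ∧ (∀ j, j ≠ p → B p j = 0) ∧ (∀ i, i ≠ p → B i p = 0) ∧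
      (∀ i j, B p p ∣ B i j) := by
  suffices H : ∀ (k : ℕ) (A : Matrix ι ι (ZMod m)), mu p A ≤ k →
      ∃ B, MEquiv A B ∧ (∀ j, j ≠ p → B p j = 0) ∧ (∀ i, i ≠ p → B i p = 0) ∧
        (∀ i j, B p p ∣ B i j) from H (mu p A) A le_rfl
  intro k
  induction k with
  | zero => exact fun A hA => absurd (lt_of_lt_of_le (mu_pos p A) hA) (lt_irrefl 0)
  | succ k IH =>
    intro A hμ
    by_cases h00 : A p p = 0
    · by_cases hz : ∀ i j, A i j = 0
      · exact ⟨A, MEquiv.refl A, fun j _ => hz p j, fun i _ => hz i p,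
          fun i j => (hz i j) ▸ dvd_zero _⟩
      · push_neg at hz
        obtain ⟨i, j, hij⟩ := hz
        set A' := A.submatrix (Equiv.swap p i) (Equiv.swap p j) with hA'
        have hc : A' p p = A i j := by simp [hA', Equiv.swap_apply_left]
        have hμ' : mu p A' ≤ k := by
          have hm : mu p A = m := by simp [mu, h00]
          have : (A i j).val < m := ZMod.val_lt _
          have hk : m ≤ k + 1 := hm ▸ hμ
          have : mu p A' < m := by
            simp only [mu, hc]
            split
            · exact absurd ‹A i j = 0› hij
            · exact ZMod.val_lt _
          omega
        obtain ⟨B, hB1, hB2, hB3, hB4⟩ := IH A' hμ'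
        exact ⟨B, (mequiv_submatrix _ _ A).trans hB1, hB2, hB3, hB4⟩
    · set a := A p p with hadef
      have hμa : a.val ≤ k + 1 := by simpa [mu, ← hadef, h00] using hμ
      -- helper to conclude from a strict decrease
      have step : ∀ A', MEquiv A A' → A' p p ≠ 0 → (A' p p).val < a.val →
          ∃ B, MEquiv A B ∧ (∀ j, j ≠ p → B p j = 0) ∧ (∀ i, i ≠ p → B i p = 0) ∧
            (∀ i j, B p p ∣ B i j) := by
        intro A' h1 h2 h3
        have : mu p A' ≤ k := by
          simp only [mu, if_neg h2]
          omega
        obtain ⟨B, hB1, hB2, hB3, hB4⟩ := IH A' this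
        exact ⟨B, h1.trans hB1, hB2, hB3, hB4⟩
      by_cases hrow : ∃ j, j ≠ p ∧ ¬ a ∣ A p j
      · obtain ⟨j, hj, hd⟩ := hrow
        obtain ⟨A', h1, h2, h3⟩ := row_step p A h00 j hj hd
        exact step A' h1 h2 h3
      · push_neg at hrow
        by_cases hcol : ∃ i, i ≠ p ∧ ¬ a ∣ A i p
        · obtain ⟨i, hi, hd⟩ := hcol
          obtain ⟨A'', h1, h2, h3⟩ := row_step p Aᵀ h00 i hi hd
          refine step A''ᵀ ?_ (by simpa using h2) (by simpa using h3)
          have := h1.transpose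
          rwa [Matrix.transpose_transpose] at this
        · push_neg at hcol
          -- clear the pivot column
          set c : ι → ZMod m := fun i =>
            if h : i = p then 0 else -(hcol i h).choose with hc
          have hcp : c p = 0 := by simp [hc]
          have h1 := mequiv_add_rows p c hcp A
          set A₁ : Matrix ι ι (ZMod m) := Matrix.of fun i j => A i j + c i * A p j with hA₁
          have hA₁pr : ∀ j, A₁ p j = A p j := fun j => by
            show A p j + c p * A p j = A p j
            rw [hcp]; ring
          have hA₁c : ∀ i, i ≠ p → A₁ i p = 0 := by
            intro i hi
            show A i p + c i * A p p = 0
            rw [hc]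
            simp only [dif_neg hi]
            linear_combination (hcol i hi).choose_spec
          -- clear the pivot row
          set v : ι → ZMod m := fun j =>
            if h : j = p then 0 else -(hrow j h).choose with hvd
          have hvp : v p = 0 := by simp [hvd]
          have h2 := mequiv_add_cols p v hvp A₁
          set B0 : Matrix ι ι (ZMod m) := Matrix.of fun i j => A₁ i j + A₁ i p * v j with hB0
          have hB0pp : B0 p p = a := by
            show A₁ p p + A₁ p p * v p = a
            rw [hvp, hA₁pr]; ring
          have hB0pr : ∀ j, j ≠ p → B0 p j = 0 := by
            intro j hj
            show A₁ p j + A₁ p p * v j = 0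
            rw [hA₁pr, hA₁pr, hvd]
            simp only [dif_neg hj]
            linear_combination (hrow j hj).choose_spec
          have hB0c : ∀ i, i ≠ p → B0 i p = 0 := by
            intro i hi
            show A₁ i p + A₁ i p * v p = 0
            rw [hA₁c i hi, hvp]; ring
          have hB0inner : ∀ i j, i ≠ p → B0 i j = A₁ i j := by
            intro i j hi
            show A₁ i j + A₁ i p * v j = A₁ i j
            rw [hA₁c i hi]; ring
          have hAB0 : MEquiv A B0 := h1.trans h2
          by_cases hdvd : ∀ i j, a ∣ B0 i j
          · exact ⟨B0, hAB0, hB0pr, hB0c, fun i j => hB0pp ▸ hdvd i j⟩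
          · push_neg at hdvd
            obtain ⟨i, j, hd⟩ := hdvd
            have hi : i ≠ p := by
              intro hip
              rw [hip] at hd
              by_cases hjp : j = p
              · rw [hjp] at hd
                exact hd hB0pp.symm.dvd
              · exact hd (by rw [hB0pr j hjp]; exact dvd_zero a)
            have hj : j ≠ p := by
              intro hjp
              rw [hjp] at hd
              exact hd (by rw [hB0c i hi]; exact dvd_zero a)
            have h3 := mequiv_pivot_row_add p i hi B0
            set B1 : Matrix ι ι (ZMod m) :=
              Matrix.of fun i' j' => if i' = p then B0 p j' + B0 i j' else B0 i' j' with hB1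
            have hB1pp : B1 p p = a := by
              show (if p = p then B0 p p + B0 i p else B0 p p) = a
              rw [if_pos rfl, hB0c i hi, hB0pp]; ring
            have hB1pj : B1 p j = B0 i j := by
              show (if p = p then B0 p j + B0 i j else B0 p j) = B0 i j
              rw [if_pos rfl, hB0pr j hj]; ring
            have hB1ne : B1 p p ≠ 0 := hB1pp ▸ h00
            have hnd : ¬ B1 p p ∣ B1 p j := by rw [hB1pp, hB1pj]; exact hd
            obtain ⟨A', h4, h5, h6⟩ := row_step p B1 hB1ne j hj hnd
            exact step A' ((hAB0.trans h3).trans h4) h5 (by rwa [hB1pp] at h6)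

end Pivot

section Diagonalize

variable {R : Type*} [CommRing R] {ι : Type*} [Fintype ι] [DecidableEq ι]

theorem MEquiv.reindex {κ : Type*} [Fintype κ] [DecidableEq κ] (e : ι ≃ κ)
    {A B : Matrix ι ι R} (h : MEquiv A B) :
    MEquiv (A.submatrix e.symm e.symm) (B.submatrix e.symm e.symm) := by
  obtain ⟨g, u, rfl⟩ := h
  refine ⟨⟨(↑g : Matrix ι ι R).submatrix e.symm e.symm,
      (↑g⁻¹ : Matrix ι ι R).submatrix e.symm e.symm, ?_, ?_⟩,
    ⟨(↑u : Matrix ι ι R).submatrix e.symm e.symm,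
      (↑u⁻¹ : Matrix ι ι R).submatrix e.symm e.symm, ?_, ?_⟩, ?_⟩
  · rw [Matrix.submatrix_mul_equiv, ← Units.val_mul]
    simp [Matrix.submatrix_one_equiv]
  · rw [Matrix.submatrix_mul_equiv, ← Units.val_mul]
    simp [Matrix.submatrix_one_equiv]
  · rw [Matrix.submatrix_mul_equiv, ← Units.val_mul]
    simp [Matrix.submatrix_one_equiv]
  · rw [Matrix.submatrix_mul_equiv, ← Units.val_mul]
    simp [Matrix.submatrix_one_equiv]
  · rw [Matrix.submatrix_mul_equiv, Matrix.submatrix_mul_equiv]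

theorem diagonal_submatrix_equiv {κ : Type*} [Fintype κ] [DecidableEq κ]
    (f : ι → R) (e : κ ≃ ι) :
    (Matrix.diagonal f).submatrix e e = Matrix.diagonal (f ∘ e) := by
  ext i j
  by_cases h : i = j
  · subst h; simp
  · rw [Matrix.submatrix_apply, Matrix.diagonal_apply_ne _ (fun hc => h (e.injective hc)),
      Matrix.diagonal_apply_ne _ h]

theorem isUnit_fromBlocks {κ₁ κ₂ : Type*} [Fintype κ₁] [DecidableEq κ₁]
    [Fintype κ₂] [DecidableEq κ₂] {P : Matrix κ₁ κ₁ R} {Q : Matrix κ₂ κ₂ R}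
    (hP : IsUnit P) (hQ : IsUnit Q) : IsUnit (Matrix.fromBlocks P 0 0 Q) := by
  obtain ⟨p, rfl⟩ := hP
  obtain ⟨q, rfl⟩ := hQ
  refine ⟨⟨Matrix.fromBlocks ↑p 0 0 ↑q, Matrix.fromBlocks ↑p⁻¹ 0 0 ↑q⁻¹, ?_, ?_⟩, rfl⟩ <;>
  · rw [Matrix.fromBlocks_multiply]
    simp [← Units.val_mul, ← Matrix.fromBlocks_one]

/-- the equivalence `Fin 1 ⊕ Fin n ≃ Fin (n+1)` sending `inl 0` to `0`. -/
def finOneSum (n : ℕ) : Fin 1 ⊕ Fin n ≃ Fin (n + 1) where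
  toFun := Sum.elim (fun _ => 0) Fin.succ
  invFun := Fin.cases (Sum.inl 0) Sum.inr
  left_inv := by
    rintro (x | i)
    · simp [Subsingleton.elim (0 : Fin 1) x]
    · simp
  right_inv := by
    intro k
    induction k using Fin.cases <;> simp

theorem diagonalize {m : ℕ} [NeZero m] :
    ∀ (n : ℕ) (A : Matrix (Fin n) (Fin n) (ZMod m)),
    ∃ d : Fin n → ZMod m, (∀ i j : Fin n, i ≤ j → d i ∣ d j) ∧ MEquiv A (Matrix.diagonal d) := by
  intro n
  induction n with
  | zero =>
    intro A
    refine ⟨fun i => 0, fun i => i.elim0, ?_⟩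
    have : A = Matrix.diagonal fun _ : Fin 0 => (0 : ZMod m) := by
      ext i
      exact i.elim0
    exact this ▸ MEquiv.refl A
  | succ n IH =>
    intro A
    set e := finOneSum n with he
    set A' := A.submatrix e e with hA'def
    obtain ⟨B, hB1, hB2, hB3, hB4⟩ := pivot_reduce (Sum.inl 0 : Fin 1 ⊕ Fin n) A'
    set a := B (Sum.inl 0) (Sum.inl 0) with ha
    set C : Matrix (Fin n) (Fin n) (ZMod m) := Matrix.of fun i j => B (Sum.inr i) (Sum.inr j)
      with hC
    have hBblock : B = Matrix.fromBlocks (Matrix.diagonal fun _ : Fin 1 => a) 0 0 C := by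
      ext i j
      rcases i with i | i <;> rcases j with j | j
      · rcases Subsingleton.elim (0 : Fin 1) i with rfl
        rcases Subsingleton.elim (0 : Fin 1) j with rfl
        simp [Matrix.fromBlocks, ← ha]
      · rcases Subsingleton.elim (0 : Fin 1) i with rfl
        simpa [Matrix.fromBlocks] using hB2 (Sum.inr j) (by simp)
      · rcases Subsingleton.elim (0 : Fin 1) j with rfl
        simpa [Matrix.fromBlocks] using hB3 (Sum.inr i) (by simp)
      · simp [Matrix.fromBlocks, hC]
    obtain ⟨d', hd'chain, hd'⟩ := IH C
    obtain ⟨U, V, hUV⟩ := hd'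
    have hCdvd : ∀ i j, a ∣ C i j := fun i j => hB4 _ _
    have hadvd : ∀ i, a ∣ d' i := by
      intro i
      have := MEquiv.dvd_all (show MEquiv C (Matrix.diagonal d') from ⟨U, V, hUV⟩) hCdvd i i
      rwa [Matrix.diagonal_apply_eq] at this
    -- conjugate the lower-right block
    have hblockU : IsUnit (Matrix.fromBlocks (1 : Matrix (Fin 1) (Fin 1) (ZMod m)) 0 0 (↑U : Matrix (Fin n) (Fin n) (ZMod m))) :=
      isUnit_fromBlocks isUnit_one U.isUnit
    have hblockV : IsUnit (Matrix.fromBlocks (1 : Matrix (Fin 1) (Fin 1) (ZMod m)) 0 0 (↑V : Matrix (Fin n) (Fin n) (ZMod m))) :=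
      isUnit_fromBlocks isUnit_one V.isUnit
    have hmul := MEquiv.of_isUnit hblockU hblockV B
    have hcomp : (Matrix.fromBlocks (1 : Matrix (Fin 1) (Fin 1) (ZMod m)) 0 0 ↑U) * B *
        (Matrix.fromBlocks (1 : Matrix (Fin 1) (Fin 1) (ZMod m)) 0 0 ↑V) =
        Matrix.diagonal (Sum.elim (fun _ : Fin 1 => a) d') := by
      rw [hBblock, Matrix.fromBlocks_multiply, Matrix.fromBlocks_multiply]
      rw [← Matrix.fromBlocks_diagonal]
      congr 1 <;> simp [hUV]
    rw [hcomp] at hmul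
    have hAd : MEquiv A' (Matrix.diagonal (Sum.elim (fun _ : Fin 1 => a) d')) :=
      (hB1.trans hmul)
    have hback := hAd.reindex e
    rw [diagonal_submatrix_equiv] at hback
    have hAA : A'.submatrix e.symm e.symm = A := by
      rw [hA'def, Matrix.submatrix_submatrix]
      simp
    rw [hAA] at hback
    refine ⟨Sum.elim (fun _ : Fin 1 => a) d' ∘ e.symm, ?_, hback⟩
    have hd0 : (Sum.elim (fun _ : Fin 1 => a) d' ∘ e.symm) 0 = a := by
      simp [he, finOneSum]
    have hds : ∀ i : Fin n, (Sum.elim (fun _ : Fin 1 => a) d' ∘ e.symm) i.succ = d' i := by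
      intro i
      simp [he, finOneSum]
    intro i j hij
    induction i using Fin.cases with
    | zero =>
      rw [hd0]
      induction j using Fin.cases with
      | zero => rw [hd0]
      | succ j' => rw [hds]; exact hadvd j'
    | succ i' =>
      induction j using Fin.cases with
      | zero => exact absurd (Fin.le_zero_iff.mp hij) (Fin.succ_ne_zero i')
      | succ j' =>
        rw [hds, hds]
        exact hd'chain i' j' (by rwa [Fin.succ_le_succ_iff] at hij)

end Diagonalize

section PAdjust

variable {m : ℕ} [NeZero m]

theorem exists_diag_P (P : Set (ZMod m))
    (hPrep : ∀ a : ZMod m, ∃! p : ZMod m, p ∈ P ∧ ∃ u : (ZMod m)ˣ, a = p * u)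
    {n : ℕ} (A : Matrix (Fin n) (Fin n) (ZMod m)) :
    ∃ d : Fin n → ZMod m, (∀ i, d i ∈ P) ∧ (∀ i j : Fin n, i ≤ j → d i ∣ d j) ∧
      MEquiv A (Matrix.diagonal d) := by
  obtain ⟨d₀, hchain, hA⟩ := diagonalize n A
  choose p hp using fun i => (hPrep (d₀ i)).exists
  choose u hu using fun i => (hp i).2
  have hdvd1 : ∀ i, p i ∣ d₀ i := fun i => ⟨(u i : ZMod m), hu i⟩
  have hdvd2 : ∀ i, d₀ i ∣ p i := fun i =>
    ⟨((u i)⁻¹ : (ZMod m)ˣ), by rw [hu i, mul_assoc, Units.mul_inv, mul_one]⟩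
  have hUd : IsUnit (Matrix.diagonal fun i => (((u i)⁻¹ : (ZMod m)ˣ) : ZMod m)) := by
    refine ⟨⟨Matrix.diagonal fun i => (((u i)⁻¹ : (ZMod m)ˣ) : ZMod m),
        Matrix.diagonal fun i => ((u i : (ZMod m)ˣ) : ZMod m), ?_, ?_⟩, rfl⟩ <;>
    · rw [Matrix.diagonal_mul_diagonal]
      convert Matrix.diagonal_one using 2
      simp [← Units.val_mul]
  have h2 := MEquiv.of_isUnit isUnit_one hUd (Matrix.diagonal d₀)
  rw [Matrix.one_mul, Matrix.diagonal_mul_diagonal] at h2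
  have hdp : (Matrix.diagonal fun i => d₀ i * (((u i)⁻¹ : (ZMod m)ˣ) : ZMod m)) =
      Matrix.diagonal p := by
    apply congrArg Matrix.diagonal
    funext i
    rw [hu i, mul_assoc, Units.mul_inv, mul_one]
  rw [hdp] at h2
  exact ⟨p, fun i => (hp i).1,
    fun i j hij => ((hdvd1 i).trans (hchain i j hij)).trans (hdvd2 j), hA.trans h2⟩

theorem card_ann (a : ZMod m) :
    Nat.card {x : ZMod m // a * x = 0} = Nat.gcd m a.val := by
  set f : ZMod m →+ ZMod m := AddMonoidHom.mulLeft a with hf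
  have hrange : f.range = AddSubgroup.zmultiples a := by
    ext y
    constructor
    · rintro ⟨x, rfl⟩
      refine ⟨(x.val : ℤ), ?_⟩
      show (x.val : ℤ) • a = a * x
      rw [zsmul_eq_mul]
      push_cast
      rw [zmod_cast_val, mul_comm]
    · rintro ⟨k, rfl⟩
      refine ⟨((k : ℤ) : ZMod m), ?_⟩
      change a * ((k : ℤ) : ZMod m) = k • a
      rw [zsmul_eq_mul, mul_comm]
  have h1 : Nat.card (ZMod m) = Nat.card (ZMod m ⧸ f.ker) * Nat.card f.ker :=
    AddSubgroup.card_eq_card_quotient_mul_card_addSubgroup f.ker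
  have h2 : Nat.card (ZMod m ⧸ f.ker) = Nat.card f.range :=
    Nat.card_congr (QuotientAddGroup.quotientKerEquivRange f).toEquiv
  have h3 : Nat.card f.range = addOrderOf a := by
    have hs : (f.range : Set (ZMod m)) = (AddSubgroup.zmultiples a : Set (ZMod m)) := by
      rw [hrange]
    exact (Nat.card_congr (Equiv.setCongr hs)).trans (Nat.card_zmultiples a)
  have h4 : addOrderOf a = m / Nat.gcd m a.val := by
    conv_lhs => rw [← zmod_cast_val a]
    exact ZMod.addOrderOf_coe a.val (NeZero.ne m)
  have h5 : Nat.card (ZMod m) = m := Nat.card_zmod m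
  have hker : Nat.card {x : ZMod m // a * x = 0} = Nat.card f.ker := by
    apply Nat.card_congr
    apply Equiv.subtypeEquivRight
    intro x
    rw [AddMonoidHom.mem_ker]
    exact Iff.rfl
  rw [hker]
  have hgdvd : Nat.gcd m a.val ∣ m := Nat.gcd_dvd_left m a.val
  have hgm : m / Nat.gcd m a.val * Nat.gcd m a.val = m := Nat.div_mul_cancel hgdvd
  have hq : 0 < m / Nat.gcd m a.val := by
    rcases Nat.eq_zero_or_pos (m / Nat.gcd m a.val) with h | h
    · rw [h, zero_mul] at hgm
      exact absurd hgm.symm (NeZero.ne m)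
    · exact h
  have := h1
  rw [h5, h2, h3, h4] at this
  -- this : m = (m / gcd) * card ker
  have h6 : m / Nat.gcd m a.val * Nat.gcd m a.val =
      m / Nat.gcd m a.val * Nat.card f.ker := by rw [hgm]; exact this
  exact (Nat.eq_of_mul_eq_mul_left hq h6).symm

theorem kerCard_diagonal {n : ℕ} (c : Fin n → ZMod m) :
    Nat.card {x : Fin n → ZMod m // (Matrix.diagonal c).mulVec x = 0} =
      ∏ i, Nat.gcd m (c i).val := by
  have he : ∀ x : Fin n → ZMod m,
      (Matrix.diagonal c).mulVec x = 0 ↔ ∀ i, c i * x i = 0 := by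
    intro x
    rw [funext_iff]
    refine forall_congr' fun i => ?_
    rw [Matrix.mulVec_diagonal]
    exact Iff.rfl
  rw [Nat.card_congr (Equiv.subtypeEquivRight he)]
  rw [Nat.card_congr (Equiv.subtypePiEquivPi (p := fun i (y : ZMod m) => c i * y = 0))]
  rw [Nat.card_pi]
  exact Finset.prod_congr rfl fun i _ => card_ann (c i)

theorem diagonal_mul_const (r : ZMod m) {n : ℕ} (f : Fin n → ZMod m) :
    (Matrix.diagonal fun i => r * f i) = r • Matrix.diagonal f := by
  ext i j
  by_cases h : i = j
  · subst h; simp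
  · simp [Matrix.diagonal_apply_ne _ h, h]

theorem diag_equiv_gcd_prod {n : ℕ} {d e : Fin n → ZMod m}
    (h : MEquiv (Matrix.diagonal d) (Matrix.diagonal e)) (r : ZMod m) :
    ∏ i, Nat.gcd m ((r * d i).val) = ∏ i, Nat.gcd m ((r * e i).val) := by
  obtain ⟨g, u, hgu⟩ := h
  have h' : MEquiv (Matrix.diagonal fun i => r * d i) (Matrix.diagonal fun i => r * e i) := by
    refine ⟨g, u, ?_⟩
    rw [diagonal_mul_const, diagonal_mul_const, Matrix.mul_smul, Matrix.smul_mul, hgu]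
  have := h'.kerCard_eq
  rwa [kerCard_diagonal, kerCard_diagonal] at this

end PAdjust

section NumberTheory

theorem sum_min_succ {n : ℕ} (j : ℕ) (x : Fin n → ℕ) :
    ∑ i, min (j+1) (x i) =
      (∑ i, min j (x i)) + (Finset.univ.filter fun i => j+1 ≤ x i).card := by
  have hpt : ∀ y, min (j+1) y = min j y + if j+1 ≤ y then 1 else 0 := by
    intro y
    split <;> omega
  calc ∑ i, min (j+1) (x i) = ∑ i, (min j (x i) + if j+1 ≤ x i then 1 else 0) :=
        Finset.sum_congr rfl fun i _ => hpt (x i)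
    _ = (∑ i, min j (x i)) + ∑ i, (if j+1 ≤ x i then 1 else 0) := Finset.sum_add_distrib
    _ = _ := by rw [Finset.sum_boole]; simp

theorem chain_card_eq {n L : ℕ} (a b : Fin n → ℕ)
    (ha : Monotone a) (hb : Monotone b) (haL : ∀ i, a i ≤ L) (hbL : ∀ i, b i ≤ L)
    (hsum : ∀ j, j ≤ L → ∑ i, min j (a i) = ∑ i, min j (b i)) : a = b := by
  have hcount : ∀ j, j + 1 ≤ L →
      (Finset.univ.filter fun i => j+1 ≤ a i).card =
      (Finset.univ.filter fun i => j+1 ≤ b i).card := by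
    intro j hj
    have h1 := hsum j (le_trans (Nat.le_succ j) hj)
    have h2 := hsum (j+1) hj
    rw [sum_min_succ j a, sum_min_succ j b, h1] at h2
    omega
  have key : ∀ (x y : Fin n → ℕ), Monotone x → Monotone y → (∀ i, y i ≤ L) →
      (∀ j, j + 1 ≤ L → (Finset.univ.filter fun i => j+1 ≤ x i).card =
        (Finset.univ.filter fun i => j+1 ≤ y i).card) → ∀ i, ¬ x i < y i := by
    intro x y hx hy hyL hc i hlt
    have hjL : x i + 1 ≤ L := le_trans hlt (hyL i)
    have hsub : (Finset.univ.filter fun i' => x i + 1 ≤ x i') ⊆ Finset.Ioi i := by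
      intro i' hi'
      rw [Finset.mem_filter] at hi'
      rw [Finset.mem_Ioi]
      by_contra hle
      push_neg at hle
      have := hx hle
      omega
    have hsup : Finset.Ici i ⊆ (Finset.univ.filter fun i' => x i + 1 ≤ y i') := by
      intro i' hi'
      rw [Finset.mem_Ici] at hi'
      rw [Finset.mem_filter]
      exact ⟨Finset.mem_univ _, le_trans hlt (hy hi')⟩
    have c1 := Finset.card_le_card hsub
    have c2 := Finset.card_le_card hsup
    rw [Fin.card_Ioi] at c1
    rw [Fin.card_Ici] at c2
    rw [hc (x i) hjL] at c1
    have := i.isLt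
    omega
  funext i
  rcases lt_trichotomy (a i) (b i) with h | h | h
  · exact absurd h (key a b ha hb hbL hcount i)
  · exact h
  · exact absurd h (key b a hb ha haL (fun j hj => (hcount j hj).symm) i)

theorem chain_unique {m : ℕ} (hm : m ≠ 0) {n : ℕ} (g h : Fin n → ℕ)
    (hgm : ∀ i, g i ∣ m) (hhm : ∀ i, h i ∣ m)
    (hgc : ∀ i j : Fin n, i ≤ j → g i ∣ g j) (hhc : ∀ i j : Fin n, i ≤ j → h i ∣ h j)
    (H : ∀ t, t ∣ m → ∏ i, Nat.gcd t (g i) = ∏ i, Nat.gcd t (h i)) : g = h := by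
  have hg0 : ∀ i, g i ≠ 0 := fun i h0 => hm (zero_dvd_iff.mp (h0 ▸ hgm i))
  have hh0 : ∀ i, h i ≠ 0 := fun i h0 => hm (zero_dvd_iff.mp (h0 ▸ hhm i))
  have main : ∀ p : ℕ, p.Prime →
      (fun i => (g i).factorization p) = fun i => (h i).factorization p := by
    intro p hp
    by_cases hpm : p ∣ m
    · have hterm : ∀ (x : ℕ), x ≠ 0 → ∀ j,
          (Nat.gcd (p^j) x).factorization p = min j (x.factorization p) := by
        intro x hx j
        rw [Nat.factorization_gcd (pow_ne_zero j hp.pos.ne') hx]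
        rw [Finsupp.inf_apply, hp.factorization_pow, Finsupp.single_eq_same]
      refine chain_card_eq (L := m.factorization p) _ _ ?_ ?_ ?_ ?_ ?_
      · intro i j hij
        have := (Nat.factorization_le_iff_dvd (hg0 i) (hg0 j)).mpr (hgc i j hij)
        exact this p
      · intro i j hij
        have := (Nat.factorization_le_iff_dvd (hh0 i) (hh0 j)).mpr (hhc i j hij)
        exact this p
      · intro i
        exact ((Nat.factorization_le_iff_dvd (hg0 i) hm).mpr (hgm i)) p
      · intro i
        exact ((Nat.factorization_le_iff_dvd (hh0 i) hm).mpr (hhm i)) p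
      · intro j hjL
        have ht : p ^ j ∣ m := (hp.pow_dvd_iff_le_factorization hm).mpr hjL
        have hE := H (p ^ j) ht
        have hgcd0g : ∀ i ∈ Finset.univ, Nat.gcd (p^j) (g i) ≠ 0 := by
          intro i _
          simp [Nat.gcd_eq_zero_iff, pow_ne_zero j hp.pos.ne', hp.ne_zero]
        have hgcd0h : ∀ i ∈ Finset.univ, Nat.gcd (p^j) (h i) ≠ 0 := by
          intro i _
          simp [Nat.gcd_eq_zero_iff, pow_ne_zero j hp.pos.ne', hp.ne_zero]
        have h1 := congrArg (fun N => N.factorization p) hE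
        simp only [Nat.factorization_prod hgcd0g, Nat.factorization_prod hgcd0h,
          Finsupp.finset_sum_apply] at h1
        calc ∑ i, min j ((g i).factorization p)
            = ∑ i, (Nat.gcd (p^j) (g i)).factorization p :=
              Finset.sum_congr rfl fun i _ => (hterm _ (hg0 i) j).symm
          _ = ∑ i, (Nat.gcd (p^j) (h i)).factorization p := h1
          _ = ∑ i, min j ((h i).factorization p) :=
              Finset.sum_congr rfl fun i _ => hterm _ (hh0 i) j
    · funext i
      have h1 : (g i).factorization p = 0 := by
        by_contra h0
        exact hpm (dvd_trans (Nat.dvd_of_factorization_pos h0) (hgm i))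
      have h2 : (h i).factorization p = 0 := by
        by_contra h0
        exact hpm (dvd_trans (Nat.dvd_of_factorization_pos h0) (hhm i))
      rw [h1, h2]
  funext i
  have hfe : (g i).factorization = (h i).factorization := by
    ext p
    by_cases hp : p.Prime
    · exact congrFun (main p hp) i
    · rw [Nat.factorization_eq_zero_of_not_prime _ hp,
        Nat.factorization_eq_zero_of_not_prime _ hp]
  exact Nat.factorization_inj (Set.mem_setOf.mpr (hg0 i)) (Set.mem_setOf.mpr (hh0 i)) hfe

end NumberTheory

section Unique

variable {m : ℕ} [NeZero m]

theorem gcd_val_mul (k : ℕ) (x : ZMod m) :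
    Nat.gcd m ((((k : ℕ) : ZMod m) * x).val) = Nat.gcd m (k * x.val) := by
  have hc : ((k * x.val : ℕ) : ZMod m) = ((k : ℕ) : ZMod m) * x := by
    rw [Nat.cast_mul, zmod_cast_val]
  rw [← hc, ZMod.val_natCast]
  conv_rhs => rw [Nat.gcd_rec m (k * x.val)]
  rw [Nat.gcd_rec m (k * x.val % m), Nat.mod_mod_of_dvd _ dvd_rfl]

theorem gcd_dvd_of_dvd {d e : ZMod m} (h : d ∣ e) :
    Nat.gcd m d.val ∣ Nat.gcd m e.val := by
  obtain ⟨c, rfl⟩ := h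
  refine Nat.dvd_gcd (Nat.gcd_dvd_left _ _) ?_
  rw [ZMod.val_mul]
  exact (Nat.dvd_mod_iff (Nat.gcd_dvd_left m d.val)).mpr
    ((Nat.gcd_dvd_right m d.val).mul_right c.val)

theorem gcd_prod_all_t {n : ℕ} {d e : Fin n → ZMod m}
    (h : MEquiv (Matrix.diagonal d) (Matrix.diagonal e)) :
    ∀ t, t ∣ m → ∏ i, Nat.gcd t (Nat.gcd m (d i).val) =
      ∏ i, Nat.gcd t (Nat.gcd m (e i).val) := by
  intro t ht
  have hm0 : m ≠ 0 := NeZero.ne m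
  have ht0 : t ≠ 0 := fun h0 => hm0 (zero_dvd_iff.mp (h0 ▸ ht))
  have hmt : (m / t) * t = m := Nat.div_mul_cancel ht
  have hqpos : 0 < m / t := Nat.div_pos (Nat.le_of_dvd (Nat.pos_of_ne_zero hm0) ht)
    (Nat.pos_of_ne_zero ht0)
  have hq := diag_equiv_gcd_prod h ((m / t : ℕ) : ZMod m)
  have hstep : ∀ x : ZMod m,
      Nat.gcd m ((((m / t : ℕ) : ZMod m) * x).val) = (m / t) * Nat.gcd t x.val := by
    intro x
    rw [gcd_val_mul]
    calc Nat.gcd m ((m/t) * x.val) = Nat.gcd ((m/t) * t) ((m/t) * x.val) := by rw [hmt]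
      _ = (m/t) * Nat.gcd t x.val := Nat.gcd_mul_left _ _ _
  rw [Finset.prod_congr rfl (fun i _ => hstep (d i)),
    Finset.prod_congr rfl (fun i _ => hstep (e i)),
    Finset.prod_mul_distrib, Finset.prod_mul_distrib, Finset.prod_const] at hq
  have hgg : ∀ x : ZMod m, Nat.gcd t x.val = Nat.gcd t (Nat.gcd m x.val) := by
    intro x
    rw [(Nat.gcd_assoc t m x.val).symm, Nat.gcd_eq_left ht]
  have hqq := Nat.eq_of_mul_eq_mul_left (pow_pos hqpos _) hq
  calc ∏ i, Nat.gcd t (Nat.gcd m (d i).val) = ∏ i, Nat.gcd t (d i).val :=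
        Finset.prod_congr rfl fun i _ => (hgg (d i)).symm
    _ = ∏ i, Nat.gcd t (e i).val := hqq
    _ = ∏ i, Nat.gcd t (Nat.gcd m (e i).val) := Finset.prod_congr rfl fun i _ => hgg (e i)

theorem exists_unit_mul (a : ZMod m) :
    ∃ u : (ZMod m)ˣ, a = ((Nat.gcd m a.val : ℕ) : ZMod m) * u := by
  set g := Nat.gcd m a.val with hgdef
  have hgm : g ∣ m := Nat.gcd_dvd_left m a.val
  have hga : g ∣ a.val := Nat.gcd_dvd_right m a.val
  have hm0 : m ≠ 0 := NeZero.ne m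
  have hg0 : g ≠ 0 := fun h0 => hm0 ((Nat.gcd_eq_zero_iff.mp h0).1)
  obtain ⟨s, hs⟩ := hga
  have hcop : Nat.Coprime s (m / g) := by
    have h1 : g * Nat.gcd (m / g) s = g := by
      calc g * Nat.gcd (m / g) s = Nat.gcd (g * (m / g)) (g * s) :=
            (Nat.gcd_mul_left g (m/g) s).symm
        _ = Nat.gcd m a.val := by rw [Nat.mul_div_cancel' hgm, ← hs]
        _ = g := rfl
    have h2 : Nat.gcd (m / g) s = 1 :=
      Nat.eq_of_mul_eq_mul_left (Nat.pos_of_ne_zero hg0) (by rw [h1, mul_one])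
    exact Nat.coprime_comm.mp h2
  have hdvd : m / g ∣ m := Nat.div_dvd_of_dvd hgm
  obtain ⟨u, hu⟩ := ZMod.unitsMap_surjective hdvd (ZMod.unitOfCoprime s hcop)
  refine ⟨u, ?_⟩
  have hcast : (ZMod.castHom hdvd (ZMod (m/g))) (u : ZMod m) = ((s : ℕ) : ZMod (m/g)) := by
    have hv := congrArg (Units.val) hu
    simpa [ZMod.unitsMap_def, ZMod.coe_unitOfCoprime] using hv
  have hx : ((g:ℕ) : ZMod m) * ((u : ZMod m) - ((s:ℕ) : ZMod m)) = 0 := by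
    set x : ZMod m := (u : ZMod m) - ((s:ℕ) : ZMod m) with hxdef
    have h5 : (ZMod.castHom hdvd (ZMod (m/g))) x = 0 := by
      rw [hxdef, map_sub, hcast, map_natCast, sub_self]
    have hxc : ((x.val : ℕ) : ZMod (m/g)) = 0 := by
      rw [ZMod.natCast_val, ← ZMod.castHom_apply (h := hdvd)]
      exact h5
    obtain ⟨kk, hkk⟩ := (ZMod.natCast_eq_zero_iff x.val (m/g)).mp hxc
    calc ((g:ℕ) : ZMod m) * x = ((g:ℕ) : ZMod m) * ((x.val : ℕ) : ZMod m) := by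
          rw [zmod_cast_val]
      _ = ((g * x.val : ℕ) : ZMod m) := by push_cast; ring
      _ = ((g * ((m/g) * kk) : ℕ) : ZMod m) := by rw [← hkk]
      _ = ((m * kk : ℕ) : ZMod m) := by rw [← mul_assoc, Nat.mul_div_cancel' hgm]
      _ = 0 := by push_cast; simp [ZMod.natCast_self]
  have ha : a = ((g:ℕ) : ZMod m) * ((s:ℕ) : ZMod m) := by
    rw [← Nat.cast_mul, ← hs, zmod_cast_val]
  rw [ha]
  linear_combination -hx

theorem P_unique_of_gcd_eq {P : Set (ZMod m)}
    (hPrep : ∀ a : ZMod m, ∃! p : ZMod m, p ∈ P ∧ ∃ u : (ZMod m)ˣ, a = p * u)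
    {d e : ZMod m} (hd : d ∈ P) (he : e ∈ P)
    (hg : Nat.gcd m d.val = Nat.gcd m e.val) : d = e := by
  obtain ⟨u, hu⟩ := exists_unit_mul d
  obtain ⟨v, hv⟩ := exists_unit_mul e
  rw [← hg] at hv
  have hde : d = e * ↑(v⁻¹ * u) := by
    rw [hu, hv, Units.val_mul]
    rw [show (((Nat.gcd m d.val : ℕ) : ZMod m) * ↑v) * (↑v⁻¹ * ↑u) =
      ((Nat.gcd m d.val : ℕ) : ZMod m) * (↑v * ↑v⁻¹) * ↑u by ring, Units.mul_inv, mul_one]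
  obtain ⟨p0, _, hp0u⟩ := hPrep d
  have h1 := hp0u d ⟨hd, 1, by simp⟩
  have h2 := hp0u e ⟨he, v⁻¹ * u, hde⟩
  rw [h1, h2]

end Unique

end SNFAux

/-- Smith normal form over the cyclic ring `Z = ℤ/mℤ`: with respect to the action
`(g,h).A = g A h⁻¹` of `GL_n(Z) × GL_n(Z)` on `M_n(Z)`, each orbit contains a unique
diagonal matrix `diag(h_1, …, h_n)` with `h_i ∈ P` and `h_1 ∣ h_2 ∣ ⋯ ∣ h_n`, where
`P` is a fixed multiplicatively closed set of representatives of the `Zˣ`-cosets. -/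
theorem smith_normal_form_cyclic_ring (m n : ℕ) (hm : 0 < m)
    (P : Set (ZMod m)) (hP1 : (1 : ZMod m) ∈ P)
    (hPmul : ∀ p ∈ P, ∀ q ∈ P, p * q ∈ P)
    (hPrep : ∀ a : ZMod m, ∃! p : ZMod m, p ∈ P ∧ ∃ u : (ZMod m)ˣ, a = p * u)
    (A : Matrix (Fin n) (Fin n) (ZMod m)) :
    ∃! d : Fin n → ZMod m,
      (∀ i, d i ∈ P) ∧
      (∀ i j : Fin n, i ≤ j → d i ∣ d j) ∧
      (∃ g h : (Matrix (Fin n) (Fin n) (ZMod m))ˣ,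
        (↑g : Matrix (Fin n) (Fin n) (ZMod m)) * A * (↑h⁻¹ : Matrix (Fin n) (Fin n) (ZMod m)) = Matrix.diagonal d) := by
  haveI : NeZero m := ⟨hm.ne'⟩
  obtain ⟨d, hdP, hdchain, hdeq⟩ := SNFAux.exists_diag_P P hPrep A
  refine ⟨d, ⟨hdP, hdchain, ?_⟩, ?_⟩
  · obtain ⟨g, u, hgu⟩ := hdeq
    exact ⟨g, u⁻¹, by rw [inv_inv]; exact hgu⟩
  · rintro e ⟨heP, hechain, g', h', hre⟩
    have hee : SNFAux.MEquiv A (Matrix.diagonal e) := ⟨g', h'⁻¹, hre⟩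
    have hde : SNFAux.MEquiv (Matrix.diagonal e) (Matrix.diagonal d) :=
      hee.symm.trans hdeq
    have H := SNFAux.gcd_prod_all_t hde
    have hgseq : (fun i => Nat.gcd m (e i).val) = fun i => Nat.gcd m (d i).val :=
      SNFAux.chain_unique (NeZero.ne m) _ _
        (fun i => Nat.gcd_dvd_left _ _) (fun i => Nat.gcd_dvd_left _ _)
        (fun i j hij => SNFAux.gcd_dvd_of_dvd (hechain i j hij))
        (fun i j hij => SNFAux.gcd_dvd_of_dvd (hdchain i j hij)) H
    funext i
    exact SNFAux.P_unique_of_gcd_eq hPrep (heP i) (hdP i) (congrFun hgseq i)
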